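/- Let 𝔥 be a Lie subalgebra over ℝ of sl(2,ℂ)_ℝ with dim_ℝ 𝔥 = 2. Then there exists g ∈ SL(2,ℂ) such that g⁻¹𝔥g is one of the following: the realified Cartan subalgebra 𝔠_ℝ := {diag(a,−a) : a ∈ ℂ}; the realified nilpotent subalgebra 𝔫_ℝ := {[[0,a],[0,0]] : a ∈ ℂ}; or the solvable subalgebra sol₂ := ℝ-span of {diag(1,−1), [[0,1],[0,0]]}. -/

import Mathlib

open Matrix Complex

attribute [local instance 100] LieRing.ofAssociativeRing

noncomputable section

abbrev M2 : Type := Matrix (Fin 2) (Fin 2) ℂ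

/-- `sl(2,ℂ)` regarded as a Lie algebra over `ℝ` (the realification `sl(2,ℂ)_ℝ`). -/
def sl2cR : LieSubalgebra ℝ M2 where
  carrier := {X | X.trace = 0}
  add_mem' := by
    intro X Y hX hY
    simp only [Set.mem_setOf_eq] at *
    rw [Matrix.trace_add, hX, hY, add_zero]
  zero_mem' := by simp
  smul_mem' := by
    intro c X hX
    simp only [Set.mem_setOf_eq] at *
    rw [Matrix.trace_smul, hX, smul_zero]
  lie_mem' := by
    intro X Y _ _
    simp only [Set.mem_setOf_eq]
    rw [Ring.lie_def, Matrix.trace_sub, Matrix.trace_mul_comm, sub_self]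

/-- The realified Cartan subalgebra `𝔠_ℝ = {diag(a, −a) : a ∈ ℂ}`. -/
def cartanR : Set M2 := {X | ∃ a : ℂ, X = !![a, 0; 0, -a]}

/-- The realified nilpotent subalgebra `𝔫_ℝ = {[[0,a],[0,0]] : a ∈ ℂ}`. -/
def nilR : Set M2 := {X | ∃ a : ℂ, X = !![0, a; 0, 0]}

/-- The solvable subalgebra `sol₂`: the real span of `diag(1,−1)` and `[[0,1],[0,0]]`. -/
def sol2 : Set M2 :=
  ↑(Submodule.span ℝ ({!![1, 0; 0, -1], !![0, 1; 0, 0]} : Set M2))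

namespace SL2aux

def hM : M2 := !![1, 0; 0, -1]
def eM : M2 := !![0, 1; 0, 0]
def ihM : M2 := !![Complex.I, 0; 0, -Complex.I]
def ieM : M2 := !![0, Complex.I; 0, 0]

lemma sqrt_exists (w : ℂ) : ∃ z : ℂ, z ^ 2 = w := IsAlgClosed.exists_pow_nat_eq w (by norm_num)

/-- conjugation as a linear map -/
def conjL (g : M2) : M2 →ₗ[ℝ] M2 where
  toFun X := g⁻¹ * X * g
  map_add' X Y := by simp [add_mul, mul_add]
  map_smul' r X := by simp [Matrix.mul_smul, Matrix.smul_mul]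

@[simp] lemma conjL_apply (g X : M2) : conjL g X = g⁻¹ * X * g := rfl

lemma isUnit_det {g : M2} (hg : g.det = 1) : IsUnit g.det := by simp [hg]

/-- conjugation as a linear equiv, for `det g = 1` -/
def conjE (g : M2) (hg : g.det = 1) : M2 ≃ₗ[ℝ] M2 :=
  LinearEquiv.ofLinear (conjL g) (conjL g⁻¹)
    (by
      refine LinearMap.ext fun X => ?_
      simp only [LinearMap.comp_apply, conjL_apply, LinearMap.id_apply,
        Matrix.nonsing_inv_nonsing_inv g (isUnit_det hg)]
      calc g⁻¹ * (g * X * g⁻¹) * g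
          = (g⁻¹ * g) * X * (g⁻¹ * g) := by noncomm_ring
        _ = X := by rw [Matrix.nonsing_inv_mul g (isUnit_det hg)]; simp)
    (by
      refine LinearMap.ext fun X => ?_
      simp only [LinearMap.comp_apply, conjL_apply, LinearMap.id_apply,
        Matrix.nonsing_inv_nonsing_inv g (isUnit_det hg)]
      calc g * (g⁻¹ * X * g) * g⁻¹
          = (g * g⁻¹) * X * (g * g⁻¹) := by noncomm_ring
        _ = X := by rw [Matrix.mul_nonsing_inv g (isUnit_det hg)]; simp)

@[simp] lemma conjE_apply (g : M2) (hg : g.det = 1) (X : M2) :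
    conjE g hg X = g⁻¹ * X * g := rfl

lemma conj_eq_of_mul_eq {g X Y : M2} (hg : g.det = 1) (h : X * g = g * Y) :
    g⁻¹ * X * g = Y := by
  calc g⁻¹ * X * g = g⁻¹ * (X * g) := by noncomm_ring
    _ = g⁻¹ * (g * Y) := by rw [h]
    _ = (g⁻¹ * g) * Y := by noncomm_ring
    _ = Y := by rw [Matrix.nonsing_inv_mul g (isUnit_det hg)]; simp

lemma trace_conj {g X : M2} (hg : g.det = 1) : (g⁻¹ * X * g).trace = X.trace := by
  rw [Matrix.trace_mul_comm, ← mul_assoc, Matrix.mul_nonsing_inv g (isUnit_det hg), one_mul]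

lemma mul_conj {g X Y : M2} (hg : g.det = 1) :
    (g⁻¹ * X * g) * (g⁻¹ * Y * g) = g⁻¹ * (X * Y) * g := by
  have h1 : g * g⁻¹ = 1 := Matrix.mul_nonsing_inv g (isUnit_det hg)
  calc (g⁻¹ * X * g) * (g⁻¹ * Y * g) = g⁻¹ * X * (g * g⁻¹) * Y * g := by noncomm_ring
    _ = g⁻¹ * (X * Y) * g := by rw [h1]; noncomm_ring

lemma finrank_span_pair_le (x y : M2) :
    Module.finrank ℝ (Submodule.span ℝ ({x, y} : Set M2)) ≤ 2 := by
  classical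
  refine (finrank_span_le_card ({x, y} : Set M2)).trans ?_
  have h : ({x, y} : Set M2).toFinset ⊆ {x, y} := by
    intro z hz; simpa using hz
  calc ({x, y} : Set M2).toFinset.card ≤ ({x, y} : Finset M2).card := Finset.card_le_card h
    _ ≤ 2 := (Finset.card_insert_le _ _).trans (by simp)

/-- a nonzero nilpotent traceless 2×2 matrix is conjugate to e = !![0,1;0,0] -/
lemma exists_conj_nil {X : M2} (htr : X.trace = 0) (hdet : X.det = 0) (hX : X ≠ 0) :
    ∃ g : M2, g.det = 1 ∧ X * g = g * !![0, 1; 0, 0] := by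
  obtain ⟨p, q, r, s, rfl⟩ : ∃ p q r s, X = !![p, q; r, s] := ⟨_, _, _, _, Matrix.eta_fin_two X⟩
  rw [Matrix.trace_fin_two_of] at htr
  rw [Matrix.det_fin_two_of] at hdet
  by_cases hr : r = 0
  · subst hr
    have hp : p = 0 := by
      have h1 : p ^ 2 = 0 := by linear_combination p * htr - hdet
      exact pow_eq_zero_iff (by norm_num) |>.mp h1
    have hs : s = 0 := by linear_combination htr - hp
    subst hp hs
    have hq : q ≠ 0 := by
      intro h
      subst h
      apply hX
      ext i j
      fin_cases i <;> fin_cases j <;> simp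
    obtain ⟨t, ht⟩ := sqrt_exists q
    have htne : t ≠ 0 := by
      intro h; apply hq; rw [← ht, h]; ring
    refine ⟨!![t, 0; 0, t⁻¹], ?_, ?_⟩
    · rw [Matrix.det_fin_two_of]
      field_simp
      norm_num
    · rw [Matrix.mul_fin_two, Matrix.mul_fin_two]
      ext i j
      fin_cases i <;> fin_cases j <;> simp
      field_simp
      linear_combination -ht
  · obtain ⟨t, ht⟩ := sqrt_exists (-r⁻¹)
    have ht2 : r * t ^ 2 = -1 := by rw [ht]; field_simp
    have hpq : p ^ 2 + q * r = 0 := by linear_combination p * htr - hdet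
    have hsp : s = -p := by linear_combination htr
    refine ⟨!![p * t, t; r * t, 0], ?_, ?_⟩
    · rw [Matrix.det_fin_two_of]
      linear_combination -ht2
    · rw [Matrix.mul_fin_two, Matrix.mul_fin_two]
      ext i j
      fin_cases i <;> fin_cases j <;> simp
      · linear_combination t * hpq
      · linear_combination (r * t) * htr

/-- a traceless 2×2 matrix with nonzero determinant is conjugate to a diagonal matrix -/
lemma exists_conj_diag {X : M2} (htr : X.trace = 0) (hdet : X.det ≠ 0) :
    ∃ g : M2, ∃ a : ℂ, a ≠ 0 ∧ g.det = 1 ∧ X * g = g * !![a, 0; 0, -a] := by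
  obtain ⟨p, q, r, s, rfl⟩ : ∃ p q r s, X = !![p, q; r, s] := ⟨_, _, _, _, Matrix.eta_fin_two X⟩
  rw [Matrix.trace_fin_two_of] at htr
  rw [Matrix.det_fin_two_of] at hdet
  have hsp : s = -p := by linear_combination htr
  subst hsp
  obtain ⟨a, ha⟩ := sqrt_exists (p ^ 2 + q * r)
  have ha0 : a ≠ 0 := by
    intro h
    apply hdet
    rw [h] at ha
    linear_combination ha
  by_cases hr : r = 0
  · subst hr
    have hp : p ≠ 0 := by
      intro h
      apply hdet
      rw [h]; ring
    obtain ⟨t, ht⟩ := sqrt_exists ((2 * p)⁻¹)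
    have ht2 : 2 * p * t ^ 2 = 1 := by rw [ht]; field_simp
    refine ⟨!![t, -t * q; 0, t * 2 * p], p, hp, ?_, ?_⟩
    · rw [Matrix.det_fin_two_of]
      linear_combination ht2
    · rw [Matrix.mul_fin_two, Matrix.mul_fin_two]
      ext i j
      fin_cases i <;> fin_cases j <;> simp <;> ring
  · obtain ⟨t, ht⟩ := sqrt_exists ((2 * a * r)⁻¹)
    have ht2 : 2 * a * r * t ^ 2 = 1 := by
      rw [ht]; field_simp
    refine ⟨!![t * (p + a), t * (p - a); t * r, t * r], a, ha0, ?_, ?_⟩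
    · rw [Matrix.det_fin_two_of]
      linear_combination ht2
    · rw [Matrix.mul_fin_two, Matrix.mul_fin_two]
      ext i j
      fin_cases i <;> fin_cases j <;> simp
      · linear_combination -t * ha
      · linear_combination -t * ha
      · ring
      · ring

lemma cartan_coe :
    ((Submodule.span ℝ ({hM, ihM} : Set M2) : Submodule ℝ M2) : Set M2) = cartanR := by
  ext Z
  simp only [SetLike.mem_coe, Submodule.mem_span_pair, cartanR, Set.mem_setOf_eq]
  constructor
  · rintro ⟨s, t, rfl⟩
    refine ⟨s + t * Complex.I, ?_⟩
    ext i j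
    fin_cases i <;> fin_cases j <;>
      simp [hM, ihM, Complex.real_smul] <;> ring
  · rintro ⟨a, rfl⟩
    refine ⟨a.re, a.im, ?_⟩
    ext i j
    fin_cases i <;> fin_cases j <;>
      simp [hM, ihM, Complex.real_smul]
    linear_combination -Complex.re_add_im a

lemma nil_coe :
    ((Submodule.span ℝ ({eM, ieM} : Set M2) : Submodule ℝ M2) : Set M2) = nilR := by
  ext Z
  simp only [SetLike.mem_coe, Submodule.mem_span_pair, nilR, Set.mem_setOf_eq]
  constructor
  · rintro ⟨s, t, rfl⟩
    refine ⟨s + t * Complex.I, ?_⟩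
    ext i j
    fin_cases i <;> fin_cases j <;>
      simp [eM, ieM, Complex.real_smul] <;> ring
  · rintro ⟨a, rfl⟩
    refine ⟨a.re, a.im, ?_⟩
    ext i j
    fin_cases i <;> fin_cases j <;>
      simp [eM, ieM, Complex.real_smul]

/-- a traceless matrix commuting with a diagonal matrix with distinct entries is in the
(realified) Cartan. -/
lemma mem_cartan_of_comm {a : ℂ} (ha : a ≠ 0) {B : M2} (htr : B.trace = 0)
    (hc : B * !![a, 0; 0, -a] = !![a, 0; 0, -a] * B) :
    B ∈ Submodule.span ℝ ({hM, ihM} : Set M2) := by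
  rw [Matrix.trace_fin_two] at htr
  have e01 := congrFun (congrFun hc 0) 1
  have e10 := congrFun (congrFun hc 1) 0
  simp [Matrix.mul_apply, Fin.sum_univ_two] at e01 e10
  have hB01 : B 0 1 = 0 := by
    rcases mul_eq_zero.mp (show (2 * a) * B 0 1 = 0 by linear_combination -e01) with h | h
    · exact absurd h (by simpa using ha)
    · exact h
  have hB10 : B 1 0 = 0 := by
    rcases mul_eq_zero.mp (show (2 * a) * B 1 0 = 0 by linear_combination e10) with h | h
    · exact absurd h (by simpa using ha)
    · exact h
  rw [Submodule.mem_span_pair]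
  refine ⟨(B 0 0).re, (B 0 0).im, ?_⟩
  ext i j
  fin_cases i <;> fin_cases j <;>
    simp [hM, ihM, Complex.real_smul, hB01, hB10]
  linear_combination -htr - Complex.re_add_im (B 0 0)

/-- a traceless matrix commuting with e is in the (realified) nilpotent algebra. -/
lemma mem_nil_of_comm {B : M2} (htr : B.trace = 0)
    (hc : B * !![0, 1; 0, 0] = !![0, 1; 0, 0] * B) :
    B ∈ Submodule.span ℝ ({eM, ieM} : Set M2) := by
  rw [Matrix.trace_fin_two] at htr
  have e00 := congrFun (congrFun hc 0) 0
  have e01 := congrFun (congrFun hc 0) 1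
  simp [Matrix.mul_apply, Fin.sum_univ_two] at e00 e01
  have hB00 : B 0 0 = 0 := by linear_combination (htr + e01) / 2
  have hB11 : B 1 1 = 0 := by linear_combination (htr - e01) / 2
  rw [Submodule.mem_span_pair]
  refine ⟨(B 0 1).re, (B 0 1).im, ?_⟩
  ext i j
  fin_cases i <;> fin_cases j <;>
    simp [eM, ieM, Complex.real_smul, ← e00, hB00, hB11]

lemma indep_of_noncomm {U V : M2} (h : U * V ≠ V * U) : LinearIndependent ℝ ![U, V] := by
  rw [LinearIndependent.pair_iff]
  intro s t hst
  by_contra hc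
  apply h
  rcases eq_or_ne t 0 with ht | ht
  · subst ht
    have hs : s ≠ 0 := by
      intro h0; exact hc ⟨h0, rfl⟩
    have hU : U = 0 := by
      have := hst
      rw [zero_smul, add_zero] at this
      exact (smul_eq_zero.mp this).resolve_left hs
    rw [hU]; simp
  · have hV : V = (-(s / t)) • U := by
      have h1 : t • V = -(s • U) := by
        rw [eq_neg_iff_add_eq_zero, add_comm]; exact hst
      have := congrArg (fun W => (t⁻¹ : ℝ) • W) h1
      simpa [smul_smul, inv_mul_cancel₀ ht, neg_div, div_eq_inv_mul, mul_comm] using this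
    rw [hV, Matrix.mul_smul, Matrix.smul_mul]

lemma span_pair_eq_of_mem {p : Submodule ℝ M2} (hp : Module.finrank ℝ p = 2)
    {U V : M2} (hU : U ∈ p) (hV : V ∈ p) (h : U * V ≠ V * U) :
    Submodule.span ℝ ({U, V} : Set M2) = p := by
  have hind := indep_of_noncomm h
  have hle : Submodule.span ℝ ({U, V} : Set M2) ≤ p := by
    rw [Submodule.span_le]
    rintro z hz
    rcases hz with rfl | hz
    · exact hU
    · rcases hz with rfl; exact hV
  have hrange : Set.range ![U, V] = ({U, V} : Set M2) := by
    simp [Matrix.range_cons, Matrix.range_empty, Set.pair_comm]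
  have hfr : Module.finrank ℝ (Submodule.span ℝ ({U, V} : Set M2)) = 2 := by
    rw [← hrange, finrank_span_eq_card hind]
    simp
  exact Submodule.eq_of_le_of_finrank_le hle (by rw [hfr, hp])

end SL2aux

open SL2aux

/-- Every 2-dimensional real Lie subalgebra of `sl(2,ℂ)_ℝ` is conjugate, by an element of
`SL(2,ℂ)`, to one of `𝔠_ℝ`, `𝔫_ℝ`, or `sol₂`. -/
theorem subalgebra_sl2cR_dim_two_classification (𝔥 : LieSubalgebra ℝ M2)
    (hle : 𝔥 ≤ sl2cR) (hdim : Module.finrank ℝ 𝔥 = 2) :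
    ∃ g : M2, g.det = 1 ∧
      ((fun X => g⁻¹ * X * g) '' (𝔥 : Set M2) = cartanR ∨
       (fun X => g⁻¹ * X * g) '' (𝔥 : Set M2) = nilR ∨
       (fun X => g⁻¹ * X * g) '' (𝔥 : Set M2) = sol2) := by
  classical
  have htr : ∀ X ∈ 𝔥, X.trace = 0 := fun X hX => hle hX
  have hdim' : Module.finrank ℝ 𝔥.toSubmodule = 2 := hdim
  have himage : ∀ (g : M2) (hg : g.det = 1),
      (fun X => g⁻¹ * X * g) '' (𝔥 : Set M2)
        = ↑(Submodule.map ((conjE g hg : M2 →ₗ[ℝ] M2)) 𝔥.toSubmodule) := by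
    intro g hg
    rw [Submodule.map_coe]
    rfl
  by_cases hab : ∀ X ∈ 𝔥, ∀ Y ∈ 𝔥, X * Y = Y * X
  · -- abelian case
    by_cases hdet : ∃ X ∈ 𝔥, X.det ≠ 0
    · -- contains a semisimple element: Cartan
      obtain ⟨X, hX, hdX⟩ := hdet
      obtain ⟨g, a, ha0, hg, hXg⟩ := exists_conj_diag (htr X hX) hdX
      refine ⟨g, hg, Or.inl ?_⟩
      rw [himage g hg]
      have hmap : Submodule.map ((conjE g hg : M2 →ₗ[ℝ] M2)) 𝔥.toSubmodule
          = Submodule.span ℝ ({hM, ihM} : Set M2) := by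
        have hle2 : Submodule.map ((conjE g hg : M2 →ₗ[ℝ] M2)) 𝔥.toSubmodule
            ≤ Submodule.span ℝ ({hM, ihM} : Set M2) := by
          rintro _ ⟨Y, hY, rfl⟩
          have hYtr : ((conjE g hg : M2 →ₗ[ℝ] M2) Y).trace = 0 := by
            show (g⁻¹ * Y * g).trace = 0
            rw [trace_conj hg]; exact htr Y hY
          refine mem_cartan_of_comm ha0 hYtr ?_
          show (g⁻¹ * Y * g) * !![a, 0; 0, -a] = !![a, 0; 0, -a] * (g⁻¹ * Y * g)
          rw [← conj_eq_of_mul_eq hg hXg, mul_conj hg, mul_conj hg,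
            hab Y hY X hX]
        refine Submodule.eq_of_le_of_finrank_le hle2 ?_
        rw [LinearEquiv.finrank_map_eq, hdim']
        exact finrank_span_pair_le _ _
      rw [hmap, cartan_coe]
    · -- all elements nilpotent
      push_neg at hdet
      obtain ⟨X, hX, hX0⟩ : ∃ X ∈ 𝔥, X ≠ 0 := by
        by_contra hc
        push_neg at hc
        have : 𝔥.toSubmodule = ⊥ := by
          rw [eq_bot_iff]
          intro x hx
          simp [hc x hx]
        rw [this] at hdim'
        simp at hdim'
      obtain ⟨g, hg, hXg⟩ := exists_conj_nil (htr X hX) (hdet X hX) hX0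
      refine ⟨g, hg, Or.inr (Or.inl ?_)⟩
      rw [himage g hg]
      have hmap : Submodule.map ((conjE g hg : M2 →ₗ[ℝ] M2)) 𝔥.toSubmodule
          = Submodule.span ℝ ({eM, ieM} : Set M2) := by
        have hle2 : Submodule.map ((conjE g hg : M2 →ₗ[ℝ] M2)) 𝔥.toSubmodule
            ≤ Submodule.span ℝ ({eM, ieM} : Set M2) := by
          rintro _ ⟨Y, hY, rfl⟩
          have hYtr : ((conjE g hg : M2 →ₗ[ℝ] M2) Y).trace = 0 := by
            show (g⁻¹ * Y * g).trace = 0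
            rw [trace_conj hg]; exact htr Y hY
          refine mem_nil_of_comm hYtr ?_
          show (g⁻¹ * Y * g) * !![0, 1; 0, 0] = !![0, 1; 0, 0] * (g⁻¹ * Y * g)
          rw [← conj_eq_of_mul_eq hg hXg, mul_conj hg, mul_conj hg,
            hab Y hY X hX]
        refine Submodule.eq_of_le_of_finrank_le hle2 ?_
        rw [LinearEquiv.finrank_map_eq, hdim']
        exact finrank_span_pair_le _ _
      rw [hmap, nil_coe]
  · -- non-abelian case: sol2
    push_neg at hab
    obtain ⟨X, hX, Y, hY, hXY⟩ := hab
    set Z : M2 := X * Y - Y * X with hZdef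
    have hZ0 : Z ≠ 0 := sub_ne_zero.mpr hXY
    have hZmem : Z ∈ 𝔥 := by
      have := 𝔥.lie_mem hX hY
      rwa [Ring.lie_def] at this
    have hspanXY : Submodule.span ℝ ({X, Y} : Set M2) = 𝔥.toSubmodule :=
      span_pair_eq_of_mem hdim' hX hY hXY
    have hZspan : Z ∈ Submodule.span ℝ ({X, Y} : Set M2) := by
      rw [hspanXY]; exact hZmem
    rw [Submodule.mem_span_pair] at hZspan
    obtain ⟨α, β, hαβ⟩ := hZspan
    -- find W ∈ 𝔥 and lam ≠ 0 with W*Z - Z*W = lam • Z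
    obtain ⟨W, hW, lam, hlam, hrel⟩ :
        ∃ W ∈ 𝔥, ∃ lam : ℝ, lam ≠ 0 ∧ W * Z - Z * W = lam • Z := by
      rcases eq_or_ne β 0 with hβ | hβ
      · have hα : α ≠ 0 := by
          intro hα
          apply hZ0
          rw [← hαβ, hα, hβ]; simp
        refine ⟨Y, hY, -α, neg_ne_zero.mpr hα, ?_⟩
        have h2 : Y * (α • X + β • Y) - (α • X + β • Y) * Y = α • (Y * X - X * Y) := by
          simp only [mul_add, add_mul, Matrix.mul_smul, Matrix.smul_mul, smul_sub]
          abel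
        rw [hαβ] at h2
        rw [h2, hZdef]
        module
      · refine ⟨X, hX, β, hβ, ?_⟩
        have h2 : X * (α • X + β • Y) - (α • X + β • Y) * X = β • (X * Y - Y * X) := by
          simp only [mul_add, add_mul, Matrix.mul_smul, Matrix.smul_mul, smul_sub]
          abel
        rw [hαβ] at h2
        rw [h2, hZdef]
    -- Z is nilpotent
    have hZtr : Z.trace = 0 := htr Z hZmem
    have hZ2tr : (Z * Z).trace = 0 := by
      have h1 : ((W * Z - Z * W) * Z).trace = 0 := by
        rw [sub_mul, Matrix.trace_sub, Matrix.trace_mul_comm (W * Z) Z, ← mul_assoc, sub_self]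
      rw [hrel, Matrix.smul_mul, Matrix.trace_smul] at h1
      exact (smul_eq_zero.mp h1).resolve_left hlam
    have hZdet : Z.det = 0 := by
      rw [Matrix.trace_fin_two] at hZtr
      rw [Matrix.trace_fin_two] at hZ2tr
      simp only [Matrix.mul_apply, Fin.sum_univ_two] at hZ2tr
      rw [Matrix.det_fin_two]
      linear_combination ((Z 0 0 + Z 1 1) / 2) * hZtr - (1 / 2) * hZ2tr
    obtain ⟨g₁, hg₁, hZg₁⟩ := exists_conj_nil hZtr hZdet hZ0
    set W' : M2 := g₁⁻¹ * W * g₁ with hW'def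
    have hWg₁ : W * g₁ = g₁ * W' := by
      rw [hW'def]
      calc W * g₁ = (g₁ * g₁⁻¹) * W * g₁ := by
            rw [Matrix.mul_nonsing_inv g₁ (isUnit_det hg₁)]; simp
        _ = g₁ * (g₁⁻¹ * W * g₁) := by noncomm_ring
    have heZ : g₁⁻¹ * Z * g₁ = !![0, 1; 0, 0] := conj_eq_of_mul_eq hg₁ hZg₁
    have hrel' : W' * !![0, 1; 0, 0] - !![0, 1; 0, 0] * W' = (lam : ℂ) • !![0, 1; 0, 0] := by
      have : W' * !![0, 1; 0, 0] - !![0, 1; 0, 0] * W'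
          = g₁⁻¹ * (W * Z - Z * W) * g₁ := by
        rw [hW'def, ← heZ, mul_conj hg₁, mul_conj hg₁]
        simp [mul_sub, sub_mul, Matrix.mul_sub, Matrix.sub_mul]
      rw [this, hrel, Matrix.mul_smul, Matrix.smul_mul, heZ]
      ext i j
      fin_cases i <;> fin_cases j <;> simp [Complex.real_smul]
    have hW'tr : W'.trace = 0 := by
      rw [hW'def, trace_conj hg₁]; exact htr W hW
    -- extract entries of W'
    have e00 := congrFun (congrFun hrel' 0) 0
    have e01 := congrFun (congrFun hrel' 0) 1
    simp [Matrix.mul_apply, Matrix.vecMul, dotProduct, Fin.sum_univ_two] at e00 e01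
    rw [Matrix.trace_fin_two] at hW'tr
    have hW'10 : W' 1 0 = 0 := by linear_combination e00
    have hW'00 : W' 0 0 = (lam : ℂ) / 2 := by linear_combination (e01 + hW'tr) / 2
    have hW'11 : W' 1 1 = -((lam : ℂ) / 2) := by linear_combination (hW'tr - e01) / 2
    set b : ℂ := W' 0 1 with hbdef
    have hW'eq : W' = !![(lam : ℂ) / 2, b; 0, -((lam : ℂ) / 2)] := by
      rw [Matrix.eta_fin_two W', hW'10, hW'00, hW'11, hbdef]
    set g₂ : M2 := !![1, -b / (lam : ℂ); 0, 1] with hg₂def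
    have hg₂ : g₂.det = 1 := by rw [hg₂def, Matrix.det_fin_two_of]; ring
    have hlamC : (lam : ℂ) ≠ 0 := by exact_mod_cast hlam
    have hW'g₂ : W' * g₂ = g₂ * ((lam / 2 : ℝ) • hM) := by
      have hsmul : ((lam / 2 : ℝ) • hM : M2) = !![(lam : ℂ) / 2, 0; 0, -((lam : ℂ) / 2)] := by
        ext i j
        fin_cases i <;> fin_cases j <;> simp [hM, Complex.real_smul] <;> push_cast <;> ring
      rw [hW'eq, hg₂def, hsmul, Matrix.mul_fin_two, Matrix.mul_fin_two]
      ext i j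
      fin_cases i <;> fin_cases j <;> simp <;> field_simp <;> ring
    have heg₂ : (!![0, 1; 0, 0] : M2) * g₂ = g₂ * !![0, 1; 0, 0] := by
      rw [hg₂def, Matrix.mul_fin_two, Matrix.mul_fin_two]
      ext i j
      fin_cases i <;> fin_cases j <;> simp
    set g : M2 := g₁ * g₂ with hgdef
    have hg : g.det = 1 := by rw [hgdef, Matrix.det_mul, hg₁, hg₂, mul_one]
    have hZg : g⁻¹ * Z * g = !![0, 1; 0, 0] := by
      refine conj_eq_of_mul_eq hg ?_
      rw [hgdef]
      calc Z * (g₁ * g₂) = (Z * g₁) * g₂ := by noncomm_ring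
        _ = (g₁ * !![0, 1; 0, 0]) * g₂ := by rw [hZg₁]
        _ = g₁ * (!![0, 1; 0, 0] * g₂) := by noncomm_ring
        _ = g₁ * (g₂ * !![0, 1; 0, 0]) := by rw [heg₂]
        _ = (g₁ * g₂) * !![0, 1; 0, 0] := by noncomm_ring
    have hWg : g⁻¹ * W * g = (lam / 2 : ℝ) • hM := by
      refine conj_eq_of_mul_eq hg ?_
      rw [hgdef]
      calc W * (g₁ * g₂) = (W * g₁) * g₂ := by noncomm_ring
        _ = (g₁ * W') * g₂ := by rw [hWg₁]
        _ = g₁ * (W' * g₂) := by noncomm_ring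
        _ = g₁ * (g₂ * ((lam / 2 : ℝ) • hM)) := by rw [hW'g₂]
        _ = (g₁ * g₂) * ((lam / 2 : ℝ) • hM) := by noncomm_ring
    refine ⟨g, hg, Or.inr (Or.inr ?_)⟩
    rw [himage g hg]
    -- 𝔥 = span {W, Z}
    have hWZcomm : W * Z ≠ Z * W := by
      intro h
      apply hZ0
      have : (0 : M2) = lam • Z := by rw [← hrel, h, sub_self]
      exact (smul_eq_zero.mp this.symm).resolve_left hlam
    have hspanWZ : Submodule.span ℝ ({W, Z} : Set M2) = 𝔥.toSubmodule :=
      span_pair_eq_of_mem hdim' hW hZmem hWZcomm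
    rw [← hspanWZ, Submodule.map_span, Set.image_pair]
    have hcW : (conjE g hg : M2 →ₗ[ℝ] M2) W = (lam / 2 : ℝ) • hM := hWg
    have hcZ : (conjE g hg : M2 →ₗ[ℝ] M2) Z = !![0, 1; 0, 0] := hZg
    rw [hcW, hcZ]
    -- span {c • hM, eM} = span {hM, eM}
    have hlam2 : (lam / 2 : ℝ) ≠ 0 := div_ne_zero hlam two_ne_zero
    have hspan : Submodule.span ℝ ({(lam / 2 : ℝ) • hM, !![0, 1; 0, 0]} : Set M2)
        = Submodule.span ℝ ({!![1, 0; 0, -1], !![0, 1; 0, 0]} : Set M2) := by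
      apply le_antisymm
      · rw [Submodule.span_le]
        intro z hz
        simp only [Set.mem_insert_iff, Set.mem_singleton_iff] at hz
        rcases hz with rfl | rfl
        · exact Submodule.smul_mem _ _ (Submodule.subset_span (by left; rfl))
        · exact Submodule.subset_span (by right; rfl)
      · rw [Submodule.span_le]
        intro z hz
        simp only [Set.mem_insert_iff, Set.mem_singleton_iff] at hz
        rcases hz with rfl | rfl
        · have h1 : (!![1, 0; 0, -1] : M2) = (lam / 2 : ℝ)⁻¹ • ((lam / 2 : ℝ) • hM) := by
            rw [smul_smul, inv_mul_cancel₀ hlam2, one_smul]; rfl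
          rw [h1]
          exact Submodule.smul_mem _ _ (Submodule.subset_span (by left; rfl))
        · exact Submodule.subset_span (by right; rfl)
    rw [hspan]
    rfl

end
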